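/- For odd k ≥ 5 and even ℓ ≥ 0, the Shannon capacity of the Tadpole graph satisfies Θ(T(k,ℓ)) = Θ(C_k) + ℓ/2, where C_k is the k-cycle. -/

import Mathlib

namespace Paper

def strongProd {V W : Type*} (G : SimpleGraph V) (H : SimpleGraph W) : SimpleGraph (V × W) :=
  SimpleGraph.fromRel (fun x y =>
    (x.1 = y.1 ∨ G.Adj x.1 y.1) ∧ (x.2 = y.2 ∨ H.Adj x.2 y.2))

def strongPow {V : Type*} (G : SimpleGraph V) (k : ℕ) : SimpleGraph (Fin k → V) :=
  SimpleGraph.fromRel (fun x y => ∀ i, x i = y i ∨ G.Adj (x i) (y i))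

noncomputable def indepNum {V : Type*} [Fintype V] (G : SimpleGraph V) : ℕ :=
  sSup {n | ∃ s : Finset V, (∀ a ∈ s, ∀ b ∈ s, a ≠ b → ¬ G.Adj a b) ∧ s.card = n}

noncomputable def shannonCapacity {V : Type*} [Fintype V] (G : SimpleGraph V) : ℝ :=
  ⨆ k : ℕ, (indepNum (strongPow G (k + 1)) : ℝ) ^ ((1 : ℝ) / (k + 1))

noncomputable def lovaszTheta {V : Type*} [Fintype V] (G : SimpleGraph V) : ℝ :=
  sSup {x : ℝ | ∃ B : Matrix V V ℝ, B.PosSemidef ∧ B.trace = 1 ∧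
    (∀ i j, G.Adj i j → B i j = 0) ∧ x = ∑ i, ∑ j, B i j}

noncomputable def fracIndepNum {V : Type*} [Fintype V] (G : SimpleGraph V) : ℝ :=
  sSup {x : ℝ | ∃ f : V → ℝ, (∀ v, 0 ≤ f v) ∧
    (∀ s : Finset V, G.IsClique (s : Set V) → ∑ v ∈ s, f v ≤ 1) ∧ x = ∑ v, f v}

def Universal {V : Type*} [Fintype V] (G : SimpleGraph V) : Prop :=
  ∀ (W : Type) [Fintype W] (H : SimpleGraph W),
    indepNum (strongProd G H) = indepNum G * indepNum H

def sigmaUnion {ι : Type*} {V : ι → Type*} (G : ∀ i, SimpleGraph (V i)) :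
    SimpleGraph (Σ i, V i) :=
  SimpleGraph.fromRel (fun x y =>
    ∃ i, ∃ a b : V i, (G i).Adj a b ∧ x = ⟨i, a⟩ ∧ y = ⟨i, b⟩)

def piStrongProd {ι : Type*} {V : ι → Type*} (G : ∀ i, SimpleGraph (V i)) :
    SimpleGraph (∀ i, V i) :=
  SimpleGraph.fromRel (fun x y => ∀ i, x i = y i ∨ (G i).Adj (x i) (y i))

def tadpole (k l : ℕ) : SimpleGraph (Fin (k + l)) :=
  SimpleGraph.fromRel (fun x y =>
    ((x : ℕ) < k ∧ (y : ℕ) < k ∧ ((x : ℕ) + 1) % k = (y : ℕ)) ∨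
    (k ≤ (x : ℕ) ∧ (y : ℕ) = (x : ℕ) + 1) ∨
    ((x : ℕ) = 0 ∧ (y : ℕ) = k))


set_option linter.unusedSectionVars false
set_option linter.unusedVariables false
set_option maxHeartbeats 1000000
open Finset

section basic
variable {V : Type*} [Fintype V] {G : SimpleGraph V}

def IsIS (G : SimpleGraph V) (s : Finset V) : Prop :=
  ∀ a ∈ s, ∀ b ∈ s, a ≠ b → ¬ G.Adj a b

lemma bdd : BddAbove {n | ∃ s : Finset V, (∀ a ∈ s, ∀ b ∈ s, a ≠ b → ¬ G.Adj a b) ∧ s.card = n} := by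
  refine ⟨Fintype.card V, ?_⟩
  rintro n ⟨s, -, rfl⟩
  exact s.card_le_univ.trans_eq Finset.card_univ

lemma IsIS.card_le {s : Finset V} (h : IsIS G s) : s.card ≤ indepNum G :=
  le_csSup bdd ⟨s, h, rfl⟩

lemma exists_isIS_card : ∃ s : Finset V, IsIS G s ∧ s.card = indepNum G := by
  have : indepNum G ∈ {n | ∃ s : Finset V, (∀ a ∈ s, ∀ b ∈ s, a ≠ b → ¬ G.Adj a b) ∧ s.card = n} :=
    Nat.sSup_mem ⟨0, ∅, by simp, by simp⟩ bdd
  exact this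

lemma one_le_indepNum [Nonempty V] : 1 ≤ indepNum G := by
  have : IsIS G {Classical.arbitrary V} := by
    intro a ha b hb hab
    simp only [Finset.mem_singleton] at ha hb
    exact absurd (ha.trans hb.symm) hab
  simpa using this.card_le

lemma indepNum_le_card : indepNum G ≤ Fintype.card V := by
  obtain ⟨s, -, hc⟩ := exists_isIS_card (G := G)
  rw [← hc]
  exact s.card_le_univ.trans_eq Finset.card_univ

lemma strongPow_adj {n : ℕ} {x y : Fin n → V} :
    (strongPow G n).Adj x y ↔ x ≠ y ∧ ∀ i, x i = y i ∨ G.Adj (x i) (y i) := by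
  constructor
  · rintro ⟨hne, h | h⟩
    · exact ⟨hne, h⟩
    · exact ⟨hne, fun i => (h i).imp Eq.symm G.adj_symm⟩
  · rintro ⟨hne, h⟩
    exact ⟨hne, Or.inl h⟩

lemma not_strongPow_adj {n : ℕ} {x y : Fin n → V} (hne : x ≠ y)
    (i : Fin n) (h1 : x i ≠ y i) (h2 : ¬ G.Adj (x i) (y i)) :
    ¬ (strongPow G n).Adj x y := by
  rw [strongPow_adj]
  rintro ⟨-, h⟩
  rcases h i with h | h
  · exact h1 h
  · exact h2 h

lemma strongPow_indep_witness {n : ℕ} {x y : Fin n → V} (hne : x ≠ y)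
    (h : ¬ (strongPow G n).Adj x y) :
    ∃ i, x i ≠ y i ∧ ¬ G.Adj (x i) (y i) := by
  by_contra hc
  push_neg at hc
  exact h (strongPow_adj.2 ⟨hne, fun i => by
    by_cases he : x i = y i
    · exact Or.inl he
    · exact Or.inr (hc i he)⟩)

lemma supermult (m n : ℕ) :
    indepNum (strongPow G m) * indepNum (strongPow G n) ≤ indepNum (strongPow G (m + n)) := by
  classical
  obtain ⟨s, hs, hsc⟩ := exists_isIS_card (G := strongPow G m)
  obtain ⟨t, ht, htc⟩ := exists_isIS_card (G := strongPow G n)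
  set u : Finset (Fin (m + n) → V) :=
    (s ×ˢ t).image (fun p => Fin.append p.1 p.2) with hu
  have hinj : Set.InjOn (fun p : (Fin m → V) × (Fin n → V) => Fin.append p.1 p.2) ↑(s ×ˢ t) := by
    rintro ⟨f, g⟩ - ⟨f', g'⟩ - h
    simp only at h
    have h1 : f = f' := by
      funext i
      have := congrFun h (Fin.castAdd n i)
      simpa [Fin.append_left] using this
    have h2 : g = g' := by
      funext i
      have := congrFun h (Fin.natAdd m i)
      simpa [Fin.append_right] using this
    simp [h1, h2]
  have hcard : u.card = indepNum (strongPow G m) * indepNum (strongPow G n) := by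
    rw [hu, Finset.card_image_of_injOn hinj, Finset.card_product, hsc, htc]
  have hindep : IsIS (strongPow G (m + n)) u := by
    rintro a ha b hb hab
    rw [hu, Finset.mem_image] at ha hb
    obtain ⟨⟨f, g⟩, hfg, rfl⟩ := ha
    obtain ⟨⟨f', g'⟩, hfg', rfl⟩ := hb
    rw [Finset.mem_product] at hfg hfg'
    by_cases hf : f = f'
    · have hg : g ≠ g' := by
        rintro rfl
        exact hab (by rw [hf])
      obtain ⟨i, hi1, hi2⟩ := strongPow_indep_witness hg (ht g hfg.2 g' hfg'.2 hg)
      exact not_strongPow_adj hab (Fin.natAdd m i)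
        (by simpa [Fin.append_right] using hi1) (by simpa [Fin.append_right] using hi2)
    · obtain ⟨i, hi1, hi2⟩ := strongPow_indep_witness hf (hs f hfg.1 f' hfg'.1 hf)
      exact not_strongPow_adj hab (Fin.castAdd n i)
        (by simpa [Fin.append_left] using hi1) (by simpa [Fin.append_left] using hi2)
  calc indepNum (strongPow G m) * indepNum (strongPow G n) = u.card := hcard.symm
    _ ≤ _ := hindep.card_le

end basic

section adj
variable {k l : ℕ}

lemma tad_adj {x y : Fin (k + l)} :
    (tadpole k l).Adj x y ↔ x ≠ y ∧
      ((((x : ℕ) < k ∧ (y : ℕ) < k ∧ ((x : ℕ) + 1) % k = (y : ℕ)) ∨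
        (k ≤ (x : ℕ) ∧ (y : ℕ) = (x : ℕ) + 1) ∨
        ((x : ℕ) = 0 ∧ (y : ℕ) = k)) ∨
       (((y : ℕ) < k ∧ (x : ℕ) < k ∧ ((y : ℕ) + 1) % k = (x : ℕ)) ∨
        (k ≤ (y : ℕ) ∧ (x : ℕ) = (y : ℕ) + 1) ∨
        ((y : ℕ) = 0 ∧ (x : ℕ) = k))) := by
  rw [tadpole, SimpleGraph.fromRel_adj]

lemma sub_val_one (hk5 : 5 ≤ k) (u v : Fin k) :
    (v - u).val = 1 ↔ (u.val + 1) % k = v.val := by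
  haveI : NeZero k := ⟨by omega⟩
  have h1 : (1 : Fin k).val = 1 := by
    rw [Fin.val_one']; exact Nat.mod_eq_of_lt (by omega)
  constructor
  · intro h
    have h2 : v - u = 1 := Fin.ext (by rw [h, h1])
    have hv : v = 1 + u := by rwa [sub_eq_iff_eq_add] at h2
    rw [hv, Fin.val_add, h1, Nat.add_comm 1 u.val]
  · intro h
    have hv : v = 1 + u := by
      apply Fin.ext
      rw [Fin.val_add, h1, Nat.add_comm 1 u.val, h]
    rw [hv, add_sub_cancel_right, h1]

lemma cyc_adj_iff (hk5 : 5 ≤ k) {u v : Fin k} :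
    (SimpleGraph.cycleGraph k).Adj u v ↔
      u ≠ v ∧ (((u.val + 1) % k = v.val) ∨ ((v.val + 1) % k = u.val)) := by
  haveI : NeZero k := ⟨by omega⟩
  rw [SimpleGraph.cycleGraph_adj']
  constructor
  · intro h
    have hne : u ≠ v := by
      rintro rfl
      rw [sub_self] at h
      simp at h
    refine ⟨hne, ?_⟩
    rcases h with h | h
    · exact Or.inr ((sub_val_one hk5 v u).1 h)
    · exact Or.inl ((sub_val_one hk5 u v).1 h)
  · rintro ⟨hne, h | h⟩
    · exact Or.inr ((sub_val_one hk5 u v).2 h)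
    · exact Or.inl ((sub_val_one hk5 v u).2 h)

lemma tad_adj_cast (hk5 : 5 ≤ k) {u v : Fin k} :
    (tadpole k l).Adj (Fin.castLE (Nat.le_add_right k l) u) (Fin.castLE (Nat.le_add_right k l) v)
      ↔ (SimpleGraph.cycleGraph k).Adj u v := by
  have hu := u.isLt
  have hv := v.isLt
  have hvu : ((Fin.castLE (Nat.le_add_right k l) u : Fin (k + l)) : ℕ) = u.val := rfl
  have hvv : ((Fin.castLE (Nat.le_add_right k l) v : Fin (k + l)) : ℕ) = v.val := rfl
  rw [tad_adj, cyc_adj_iff hk5, hvu, hvv]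
  constructor
  · rintro ⟨hne, h⟩
    refine ⟨fun e => hne (by rw [e]), ?_⟩
    rcases h with (⟨_, _, h⟩ | ⟨h1, h2⟩ | ⟨h1, h2⟩) | (⟨_, _, h⟩ | ⟨h1, h2⟩ | ⟨h1, h2⟩)
    · exact Or.inl h
    · omega
    · omega
    · exact Or.inr h
    · omega
    · omega
  · rintro ⟨hne, h⟩
    refine ⟨fun e => hne (Fin.castLE_injective _ e), ?_⟩
    rcases h with h | h
    · exact Or.inl (Or.inl ⟨hu, hv, h⟩)
    · exact Or.inr (Or.inl ⟨hv, hu, h⟩)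

lemma tad_adj_path (hk5 : 5 ≤ k) {p q : Fin (k + l)} (hp : k ≤ p.val) (hq : k ≤ q.val) :
    (tadpole k l).Adj p q ↔ (q.val = p.val + 1 ∨ p.val = q.val + 1) := by
  rw [tad_adj]
  constructor
  · rintro ⟨hne, h⟩
    rcases h with (⟨h1, _, _⟩ | ⟨h1, h2⟩ | ⟨h1, h2⟩) | (⟨h1, _, _⟩ | ⟨h1, h2⟩ | ⟨h1, h2⟩)
    · omega
    · exact Or.inl h2
    · omega
    · omega
    · exact Or.inr h2
    · omega
  · intro h
    have hne : p ≠ q := by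
      rintro rfl
      omega
    rcases h with h | h
    · exact ⟨hne, Or.inl (Or.inr (Or.inl ⟨hp, h⟩))⟩
    · exact ⟨hne, Or.inr (Or.inr (Or.inl ⟨hq, h⟩))⟩

lemma tad_not_adj_mixed (hk5 : 5 ≤ k) {p q : Fin (k + l)} (hp : p.val < k)
    (hq : k + 1 ≤ q.val) : ¬ (tadpole k l).Adj p q := by
  rw [tad_adj]
  rintro ⟨hne, h⟩
  rcases h with (⟨h1, h2, _⟩ | ⟨h1, h2⟩ | ⟨h1, h2⟩) | (⟨h1, h2, _⟩ | ⟨h1, h2⟩ | ⟨h1, h2⟩) <;> omega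

end adj

section counting
variable {k l c n : ℕ}

def keyS {k l n : ℕ} (f : Fin n → Fin (k + l)) : Finset (Fin n) :=
  Finset.univ.filter (fun i => (f i).val < k)

lemma mem_keyS {f : Fin n → Fin (k + l)} {i : Fin n} :
    i ∈ keyS (k := k) (l := l) f ↔ (f i).val < k := by
  simp [keyS]

def TF (c : ℕ) {n : ℕ} (S : Finset (Fin n)) : Finset (Fin n → ℕ) :=
  Fintype.piFinset (fun i => if i ∈ S then ({0} : Finset ℕ) else Finset.range c)

lemma TF_spec {S : Finset (Fin n)} {u : Fin n → ℕ} (hu : u ∈ TF c S) (i : Fin n) :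
    (i ∈ S → u i = 0) ∧ (i ∉ S → u i < c) := by
  have := Fintype.mem_piFinset.1 hu i
  constructor
  · intro hi
    rw [if_pos hi] at this
    simpa using this
  · intro hi
    rw [if_neg hi] at this
    simpa using this

lemma card_TF {S : Finset (Fin n)} : (TF c S).card = c ^ (n - S.card) := by
  rw [TF, Fintype.card_piFinset]
  have h1 : ∀ i : Fin n,
      (if i ∈ S then ({0} : Finset ℕ) else Finset.range c).card = if i ∈ S then 1 else c := by
    intro i; split <;> simp
  rw [Finset.prod_congr rfl (fun i _ => h1 i)]
  rw [← Finset.prod_mul_prod_compl S (fun i => if i ∈ S then 1 else c)]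
  rw [Finset.prod_congr rfl (fun i hi => if_pos hi),
    Finset.prod_congr rfl (fun i (hi : i ∈ Sᶜ) => if_neg (Finset.mem_compl.1 hi))]
  simp [Finset.card_compl]

def pathV (k l : ℕ) (hk : 0 < k) (u : ℕ) : Fin (k + l) :=
  if h2 : k + 2 * u + 1 < k + l then ⟨k + 2 * u + 1, h2⟩
  else ⟨0, Nat.lt_of_lt_of_le hk (Nat.le_add_right k l)⟩

def Phi (hk : 0 < k) (l : ℕ) (S : Finset (Fin n)) (g : Fin S.card → Fin k) (u : Fin n → ℕ) :
    Fin n → Fin (k + l) := fun i =>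
  if h : i ∈ S then Fin.castLE (Nat.le_add_right k l) (g ((S.orderIsoOfFin rfl).symm ⟨i, h⟩))
  else pathV k l hk (u i)

lemma Phi_apply_mem (hk : 0 < k) {S : Finset (Fin n)} {g : Fin S.card → Fin k} {u : Fin n → ℕ}
    {i : Fin n} (h : i ∈ S) :
    Phi hk l S g u i = Fin.castLE (Nat.le_add_right k l) (g ((S.orderIsoOfFin rfl).symm ⟨i, h⟩)) :=
  dif_pos h

lemma Phi_apply_oe (hk : 0 < k) {S : Finset (Fin n)} {g : Fin S.card → Fin k} {u : Fin n → ℕ}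
    (j : Fin S.card) :
    Phi hk l S g u ((S.orderIsoOfFin rfl) j) = Fin.castLE (Nat.le_add_right k l) (g j) := by
  have h : ((S.orderIsoOfFin rfl) j : Fin n) ∈ S := (S.orderIsoOfFin rfl j).2
  rw [Phi_apply_mem hk h]
  congr 1
  have : (⟨((S.orderIsoOfFin rfl) j : Fin n), h⟩ : {x // x ∈ S}) = (S.orderIsoOfFin rfl) j :=
    Subtype.ext rfl
  rw [this, OrderIso.symm_apply_apply]

lemma Phi_val_mem (hk : 0 < k) {S : Finset (Fin n)} {g : Fin S.card → Fin k} {u : Fin n → ℕ}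
    {i : Fin n} (h : i ∈ S) : (Phi hk l S g u i).val < k := by
  rw [Phi_apply_mem hk h]
  exact (g _).isLt

lemma Phi_val_not_mem (hk : 0 < k) (hc : l = 2 * c) {S : Finset (Fin n)}
    {g : Fin S.card → Fin k} {u : Fin n → ℕ} {i : Fin n} (h : i ∉ S) (hu : u i < c) :
    (Phi hk l S g u i).val = k + 2 * u i + 1 := by
  rw [Phi, dif_neg h, pathV, dif_pos (by omega)]

lemma keyS_Phi (hk : 0 < k) (hc : l = 2 * c) {S : Finset (Fin n)}
    {g : Fin S.card → Fin k} {u : Fin n → ℕ} (hu : u ∈ TF c S) :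
    keyS (Phi hk l S g u) = S := by
  ext i
  rw [mem_keyS]
  constructor
  · intro h
    by_contra hi
    rw [Phi_val_not_mem hk hc hi ((TF_spec hu i).2 hi)] at h
    omega
  · intro h
    exact Phi_val_mem hk h

lemma le_tad_pow (hk5 : 5 ≤ k) (hc : l = 2 * c) (n : ℕ) :
    ∑ S ∈ (Finset.univ : Finset (Fin n)).powerset,
        indepNum (strongPow (SimpleGraph.cycleGraph k) S.card) * c ^ (n - S.card)
      ≤ indepNum (strongPow (tadpole k l) n) := by
  classical
  have hk0 : 0 < k := by omega
  have H := fun m => exists_isIS_card (G := strongPow (SimpleGraph.cycleGraph k) m)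
  choose J hJ hJc using H
  set B : Finset (Fin n) → Finset (Fin n → Fin (k + l)) :=
    fun S => (J S.card ×ˢ TF c S).image (fun p => Phi hk0 l S p.1 p.2) with hB
  have hinj : ∀ S : Finset (Fin n),
      Set.InjOn (fun p : (Fin S.card → Fin k) × (Fin n → ℕ) => Phi hk0 l S p.1 p.2)
        ↑(J S.card ×ˢ TF c S) := by
    rintro S ⟨g, u⟩ hgu ⟨g', u'⟩ hgu' heq
    rw [Finset.mem_coe, Finset.mem_product] at hgu hgu'
    have hgu2 : u ∈ TF c S := hgu.2
    have hgu2' : u' ∈ TF c S := hgu'.2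
    simp only at heq
    have hg : g = g' := by
      funext j
      have h1 := congrFun heq ((S.orderIsoOfFin rfl) j)
      rw [Phi_apply_oe, Phi_apply_oe] at h1
      exact Fin.castLE_injective _ h1
    have hu : u = u' := by
      funext i
      by_cases hi : i ∈ S
      · rw [(TF_spec hgu2 i).1 hi, (TF_spec hgu2' i).1 hi]
      · have h1 := congrArg Fin.val (congrFun heq i)
        rw [Phi_val_not_mem hk0 hc hi ((TF_spec hgu2 i).2 hi),
          Phi_val_not_mem hk0 hc hi ((TF_spec hgu2' i).2 hi)] at h1
        omega
    rw [hg, hu]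
  have hkeyB : ∀ S : Finset (Fin n), ∀ f ∈ B S, keyS f = S := by
    rintro S f hf
    rw [hB, Finset.mem_image] at hf
    obtain ⟨⟨g, u⟩, hgu, rfl⟩ := hf
    rw [Finset.mem_product] at hgu
    exact keyS_Phi hk0 hc hgu.2
  have hcardB : ∀ S : Finset (Fin n),
      (B S).card = indepNum (strongPow (SimpleGraph.cycleGraph k) S.card) * c ^ (n - S.card) := by
    intro S
    rw [hB]
    simp only
    rw [Finset.card_image_of_injOn (hinj S), Finset.card_product, hJc, card_TF]
  have hdisj : ∀ S ∈ (Finset.univ : Finset (Fin n)).powerset,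
      ∀ S' ∈ (Finset.univ : Finset (Fin n)).powerset, S ≠ S' → Disjoint (B S) (B S') := by
    intro S _ S' _ hne
    rw [Finset.disjoint_left]
    intro f hf hf'
    exact hne ((hkeyB S f hf).symm.trans (hkeyB S' f hf'))
  have hindep : IsIS (strongPow (tadpole k l) n)
      (((Finset.univ : Finset (Fin n)).powerset).biUnion B) := by
    intro f hf f' hf' hne
    obtain ⟨S, hS, hfS⟩ := Finset.mem_biUnion.1 hf
    obtain ⟨S', hS', hfS'⟩ := Finset.mem_biUnion.1 hf'
    rw [hB, Finset.mem_image] at hfS hfS'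
    obtain ⟨⟨g, u⟩, hgu, rfl⟩ := hfS
    obtain ⟨⟨g', u'⟩, hgu', rfl⟩ := hfS'
    rw [Finset.mem_product] at hgu hgu'
    have hgu1 : g ∈ J S.card := hgu.1
    have hgu2 : u ∈ TF c S := hgu.2
    have hgu1' : g' ∈ J S'.card := hgu'.1
    have hgu2' : u' ∈ TF c S' := hgu'.2
    simp only at hne ⊢
    by_cases hSS : S = S'
    · subst hSS
      by_cases hgg : g = g'
      · have huu : u ≠ u' := by
          rintro rfl
          exact hne (by rw [hgg])
        obtain ⟨i, hi⟩ := Function.ne_iff.1 huu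
        have hiS : i ∉ S := by
          intro h
          rw [(TF_spec hgu2 i).1 h, (TF_spec hgu2' i).1 h] at hi
          exact hi rfl
        have hv1 := Phi_val_not_mem (l := l) hk0 hc (g := g) (u := u) hiS ((TF_spec hgu2 i).2 hiS)
        have hv2 := Phi_val_not_mem (l := l) hk0 hc (g := g') (u := u') hiS ((TF_spec hgu2' i).2 hiS)
        apply not_strongPow_adj hne i
        · intro e
          have := congrArg Fin.val e
          omega
        · rw [tad_adj_path hk5 (by omega) (by omega)]
          omega
      · obtain ⟨j, hj1, hj2⟩ := strongPow_indep_witness hgg (hJ S.card g hgu.1 g' hgu'.1 hgg)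
        apply not_strongPow_adj hne ((S.orderIsoOfFin rfl) j)
        · rw [Phi_apply_oe, Phi_apply_oe]
          exact fun e => hj1 (Fin.castLE_injective _ e)
        · rw [Phi_apply_oe, Phi_apply_oe, tad_adj_cast hk5]
          exact hj2
    · have : ∃ i : Fin n, ¬ (i ∈ S ↔ i ∈ S') := by
        by_contra hcon
        push_neg at hcon
        exact hSS (Finset.ext hcon)
      obtain ⟨i, hi⟩ := this
      by_cases hiS : i ∈ S
      · have hiS' : i ∉ S' := fun h => hi ⟨fun _ => h, fun _ => hiS⟩
        have hv1 := Phi_val_mem (l := l) hk0 (g := g) (u := u) hiS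
        have hv2 := Phi_val_not_mem (l := l) hk0 hc (g := g') (u := u') hiS' ((TF_spec hgu2' i).2 hiS')
        apply not_strongPow_adj hne i
        · intro e
          have := congrArg Fin.val e
          omega
        · exact tad_not_adj_mixed hk5 hv1 (by omega)
      · have hiS' : i ∈ S' := by
          by_contra h
          exact hi ⟨fun h' => absurd h' hiS, fun h' => absurd h' h⟩
        have hv1 := Phi_val_not_mem (l := l) hk0 hc (g := g) (u := u) hiS ((TF_spec hgu2 i).2 hiS)
        have hv2 := Phi_val_mem (l := l) hk0 (g := g') (u := u') hiS'
        apply not_strongPow_adj hne i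
        · intro e
          have := congrArg Fin.val e
          omega
        · exact fun h => tad_not_adj_mixed hk5 hv2 (by omega) h.symm
  calc ∑ S ∈ (Finset.univ : Finset (Fin n)).powerset,
        indepNum (strongPow (SimpleGraph.cycleGraph k) S.card) * c ^ (n - S.card)
      = ∑ S ∈ (Finset.univ : Finset (Fin n)).powerset, (B S).card :=
        Finset.sum_congr rfl (fun S _ => (hcardB S).symm)
    _ = (((Finset.univ : Finset (Fin n)).powerset).biUnion B).card :=
        (Finset.card_biUnion hdisj).symm
    _ ≤ _ := hindep.card_le


lemma tad_pow_le (hk5 : 5 ≤ k) (hc : l = 2 * c) (n : ℕ) :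
    indepNum (strongPow (tadpole k l) n) ≤
      ∑ S ∈ (Finset.univ : Finset (Fin n)).powerset,
        indepNum (strongPow (SimpleGraph.cycleGraph k) S.card) * c ^ (n - S.card) := by
  classical
  have hk0 : 0 < k := by omega
  obtain ⟨I, hI, hIc⟩ := exists_isIS_card (G := strongPow (tadpole k l) n)
  rw [← hIc]
  rw [Finset.card_eq_sum_card_fiberwise (f := fun f => keyS (k := k) (l := l) f)
    (t := (Finset.univ : Finset (Fin n)).powerset)
    (fun f _ => Finset.mem_powerset.2 (Finset.subset_univ _))]
  apply Finset.sum_le_sum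
  intro S hS
  set τ : (Fin n → Fin (k + l)) → (Fin n → ℕ) :=
    fun f i => if i ∈ S then 0 else ((f i).val - k) / 2 with hτ
  have hfact : ∀ f ∈ I.filter (fun f => keyS f = S), ∀ i : Fin n,
      (i ∈ S → (f i).val < k) ∧ (i ∉ S → k ≤ (f i).val ∧ (f i).val < k + 2 * c ∧
        τ f i = ((f i).val - k) / 2) := by
    intro f hf i
    rw [Finset.mem_filter] at hf
    have hkey := hf.2
    constructor
    · intro hi
      rw [← hkey, mem_keyS] at hi
      exact hi
    · intro hi
      have hi' := hi
      rw [← hkey, mem_keyS] at hi'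
      have hlt := (f i).isLt
      refine ⟨by omega, by omega, ?_⟩
      rw [hτ]
      simp only
      rw [if_neg hi]
  have hfiber : ∀ f ∈ I.filter (fun f => keyS f = S), τ f ∈ TF c S := by
    intro f hf
    rw [TF, Fintype.mem_piFinset]
    intro i
    by_cases hi : i ∈ S
    · rw [if_pos hi]
      simp [hτ, hi]
    · rw [if_neg hi]
      obtain ⟨h1, h2, h3⟩ := (hfact f hf i).2 hi
      rw [Finset.mem_range, h3]
      omega
  rw [Finset.card_eq_sum_card_fiberwise hfiber]
  have hbound : ∀ u ∈ TF c S,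
      ((I.filter (fun f => keyS f = S)).filter (fun f => τ f = u)).card ≤
        indepNum (strongPow (SimpleGraph.cycleGraph k) S.card) := by
    intro u hu
    set F := (I.filter (fun f => keyS f = S)).filter (fun f => τ f = u) with hF
    have hFf : ∀ f ∈ F, f ∈ I ∧ f ∈ I.filter (fun f => keyS f = S) ∧ τ f = u := by
      intro f hf
      rw [hF, Finset.mem_filter] at hf
      exact ⟨(Finset.mem_filter.1 hf.1).1, hf.1, hf.2⟩
    set toK : Fin (k + l) → Fin k := fun v => if h : v.val < k then ⟨v.val, h⟩ else ⟨0, hk0⟩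
      with htoK
    have toK_val : ∀ v : Fin (k + l), v.val < k → (toK v).val = v.val := by
      intro v hv
      rw [htoK]
      simp only
      rw [dif_pos hv]
    have toK_cast : ∀ v : Fin (k + l), v.val < k →
        Fin.castLE (Nat.le_add_right k l) (toK v) = v := by
      intro v hv
      apply Fin.ext
      exact toK_val v hv
    set σ : (Fin n → Fin (k + l)) → (Fin S.card → Fin k) :=
      fun f j => toK (f ((S.orderIsoOfFin rfl) j)) with hσ
    have hwit : ∀ f ∈ F, ∀ f' ∈ F, f ≠ f' → ∃ i : Fin n, i ∈ S ∧ f i ≠ f' i ∧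
        ¬ (tadpole k l).Adj (f i) (f' i) := by
      intro f hf f' hf' hne
      obtain ⟨hfI, hfS, hfu⟩ := hFf f hf
      obtain ⟨hfI', hfS', hfu'⟩ := hFf f' hf'
      obtain ⟨i, h1, h2⟩ := strongPow_indep_witness hne (hI f hfI f' hfI' hne)
      refine ⟨i, ?_, h1, h2⟩
      by_contra hi
      obtain ⟨ha1, ha2, ha3⟩ := (hfact f hfS i).2 hi
      obtain ⟨hb1, hb2, hb3⟩ := (hfact f' hfS' i).2 hi
      have hab : (f i).val ≠ (f' i).val := fun e => h1 (Fin.ext e)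
      have hdiv : ((f i).val - k) / 2 = ((f' i).val - k) / 2 := by
        rw [← ha3, ← hb3, hfu, hfu']
      have : (f' i).val = (f i).val + 1 ∨ (f i).val = (f' i).val + 1 := by omega
      exact h2 ((tad_adj_path hk5 ha1 hb1).2 this)
    have hinj : Set.InjOn σ ↑F := by
      intro f hf f' hf' heq
      rw [Finset.mem_coe] at hf hf'
      by_contra hne
      obtain ⟨i, hiS, h1, h2⟩ := hwit f hf f' hf' hne
      have hj := congrFun heq ((S.orderIsoOfFin rfl).symm ⟨i, hiS⟩)
      rw [hσ] at hj
      simp only [OrderIso.apply_symm_apply] at hj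
      have hv1 := ((hfact f (hFf f hf).2.1 i).1) hiS
      have hv2 := ((hfact f' (hFf f' hf').2.1 i).1) hiS
      apply h1
      apply Fin.ext
      rw [← toK_val (f i) hv1, ← toK_val (f' i) hv2, hj]
    have hindep : IsIS (strongPow (SimpleGraph.cycleGraph k) S.card) (F.image σ) := by
      intro x hx y hy hxy
      obtain ⟨f, hf, rfl⟩ := Finset.mem_image.1 hx
      obtain ⟨f', hf', rfl⟩ := Finset.mem_image.1 hy
      have hne : f ≠ f' := fun e => hxy (by rw [e])
      obtain ⟨i, hiS, h1, h2⟩ := hwit f hf f' hf' hne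
      have hv1 := ((hfact f (hFf f hf).2.1 i).1) hiS
      have hv2 := ((hfact f' (hFf f' hf').2.1 i).1) hiS
      apply not_strongPow_adj hxy ((S.orderIsoOfFin rfl).symm ⟨i, hiS⟩)
      · rw [hσ]
        simp only [OrderIso.apply_symm_apply]
        intro e
        apply h1
        apply Fin.ext
        rw [← toK_val (f i) hv1, ← toK_val (f' i) hv2, e]
      · rw [hσ]
        simp only [OrderIso.apply_symm_apply]
        intro hadj
        have := (tad_adj_cast (l := l) hk5).2 hadj
        rw [toK_cast (f i) hv1, toK_cast (f' i) hv2] at this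
        exact h2 this
    calc F.card = (F.image σ).card := (Finset.card_image_of_injOn hinj).symm
      _ ≤ _ := hindep.card_le
  calc ∑ u ∈ TF c S, ((I.filter (fun f => keyS f = S)).filter (fun f => τ f = u)).card
      ≤ ∑ u ∈ TF c S, indepNum (strongPow (SimpleGraph.cycleGraph k) S.card) :=
        Finset.sum_le_sum hbound
    _ = c ^ (n - S.card) * indepNum (strongPow (SimpleGraph.cycleGraph k) S.card) := by
        rw [Finset.sum_const, card_TF, smul_eq_mul]
    _ = _ := mul_comm _ _

end counting

section analytic

lemma binom_sum (x y : ℝ) (n : ℕ) :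
    ∑ S ∈ (Finset.univ : Finset (Fin n)).powerset, x ^ S.card * y ^ (n - S.card)
      = (x + y) ^ n := by
  have h := Finset.prod_add (fun _ : Fin n => x) (fun _ : Fin n => y) Finset.univ
  rw [Finset.prod_const, Finset.card_univ, Fintype.card_fin] at h
  rw [h]
  refine Finset.sum_congr rfl (fun S hS => ?_)
  rw [Finset.prod_const, Finset.prod_const,
    Finset.card_sdiff_of_subset (Finset.subset_univ S), Finset.card_univ, Fintype.card_fin]

variable {V : Type*} [Fintype V] [Nonempty V] (G : SimpleGraph V)

lemma indepNum_strongPow_le_pow (n : ℕ) :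
    indepNum (strongPow G n) ≤ Fintype.card V ^ n := by
  classical
  have h := indepNum_le_card (G := strongPow G n)
  simpa [Fintype.card_fun] using h

lemma capacity_bddAbove : BddAbove (Set.range fun j : ℕ =>
    (indepNum (strongPow G (j + 1)) : ℝ) ^ ((1 : ℝ) / (j + 1))) := by
  refine ⟨(Fintype.card V : ℝ), ?_⟩
  rintro x ⟨j, rfl⟩
  have h1 : (indepNum (strongPow G (j + 1)) : ℝ) ≤ (Fintype.card V : ℝ) ^ (j + 1 : ℕ) := by
    exact_mod_cast indepNum_strongPow_le_pow G (j + 1)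
  have hcard : (0 : ℝ) ≤ (Fintype.card V : ℝ) := Nat.cast_nonneg _
  have h3 := Real.rpow_le_rpow (Nat.cast_nonneg _) h1
    (by positivity : (0 : ℝ) ≤ 1 / ((j : ℝ) + 1))
  refine h3.trans_eq ?_
  rw [← Real.rpow_natCast (Fintype.card V : ℝ) (j + 1), ← Real.rpow_mul hcard]
  push_cast
  rw [mul_one_div, div_self (by positivity), Real.rpow_one]

lemma le_capacity (j : ℕ) :
    (indepNum (strongPow G (j + 1)) : ℝ) ^ ((1 : ℝ) / (j + 1)) ≤ shannonCapacity G :=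
  le_ciSup (capacity_bddAbove G) j

lemma capacity_nonneg : 0 ≤ shannonCapacity G :=
  le_trans (Real.rpow_nonneg (Nat.cast_nonneg _) _) (le_capacity G 0)

lemma indepNum_le_capacity_pow (n : ℕ) :
    (indepNum (strongPow G n) : ℝ) ≤ shannonCapacity G ^ n := by
  classical
  cases n with
  | zero =>
    rw [pow_zero]
    have h := indepNum_le_card (G := strongPow G 0)
    have h2 : Fintype.card (Fin 0 → V) = 1 := by simp
    exact_mod_cast h.trans_eq h2
  | succ j =>
    set a := (indepNum (strongPow G (j + 1)) : ℝ) with ha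
    have ha0 : 0 ≤ a := Nat.cast_nonneg _
    have h1 : a ^ ((1 : ℝ) / (j + 1)) ≤ shannonCapacity G := le_capacity G j
    have h2 : (a ^ ((1 : ℝ) / (j + 1))) ^ (j + 1 : ℕ) ≤ shannonCapacity G ^ (j + 1 : ℕ) :=
      pow_le_pow_left₀ (Real.rpow_nonneg ha0 _) h1 _
    refine le_trans (le_of_eq ?_) h2
    rw [← Real.rpow_natCast (a ^ ((1 : ℝ) / (j + 1))) (j + 1), ← Real.rpow_mul ha0]
    push_cast
    rw [one_div_mul_cancel (by positivity), Real.rpow_one]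

lemma one_le_indepNum_strongPow (n : ℕ) : 1 ≤ indepNum (strongPow G n) := by
  classical
  exact one_le_indepNum

lemma supermult_pow (m q r : ℕ) :
    indepNum (strongPow G m) ^ q ≤ indepNum (strongPow G (m * q + r)) := by
  classical
  induction q with
  | zero =>
    rw [pow_zero, Nat.mul_zero, Nat.zero_add]
    exact one_le_indepNum_strongPow G r
  | succ t ih =>
    have h1 : indepNum (strongPow G m) ^ (t + 1)
        ≤ indepNum (strongPow G (m * t + r)) * indepNum (strongPow G m) := by
      rw [pow_succ]
      exact Nat.mul_le_mul_right _ ih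
    have h2 := supermult (G := G) (m * t + r) m
    have h3 : m * t + r + m = m * (t + 1) + r := by ring
    rw [h3] at h2
    exact h1.trans h2

end analytic

section final
variable {k l c : ℕ}

lemma capacity_tadpole_le (hk5 : 5 ≤ k) (hc : l = 2 * c) :
    shannonCapacity (tadpole k l) ≤
      shannonCapacity (SimpleGraph.cycleGraph k) + (c : ℝ) := by
  classical
  haveI : Nonempty (Fin k) := ⟨⟨0, by omega⟩⟩
  haveI : Nonempty (Fin (k + l)) := ⟨⟨0, by omega⟩⟩
  set Θ := shannonCapacity (SimpleGraph.cycleGraph k) with hΘ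
  have hΘ0 : 0 ≤ Θ := capacity_nonneg _
  have hc0 : (0 : ℝ) ≤ (c : ℝ) := Nat.cast_nonneg _
  apply ciSup_le
  intro j
  set n := j + 1 with hn
  have h1 : (indepNum (strongPow (tadpole k l) n) : ℝ) ≤ (Θ + c) ^ n := by
    have h2 := tad_pow_le hk5 hc n
    have h3 : (indepNum (strongPow (tadpole k l) n) : ℝ) ≤
        ∑ S ∈ (Finset.univ : Finset (Fin n)).powerset,
          (indepNum (strongPow (SimpleGraph.cycleGraph k) S.card) : ℝ) * (c : ℝ) ^ (n - S.card) := by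
      exact_mod_cast h2
    refine h3.trans ?_
    rw [← binom_sum Θ (c : ℝ) n]
    refine Finset.sum_le_sum (fun S hS => ?_)
    exact mul_le_mul_of_nonneg_right (indepNum_le_capacity_pow _ _) (by positivity)
  have h4 := Real.rpow_le_rpow (Nat.cast_nonneg _) h1
    (by positivity : (0 : ℝ) ≤ 1 / ((j : ℝ) + 1))
  refine h4.trans_eq ?_
  rw [← Real.rpow_natCast (Θ + (c : ℝ)) n, ← Real.rpow_mul (by positivity)]
  rw [hn]
  push_cast
  rw [mul_one_div, div_self (by positivity), Real.rpow_one]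

lemma le_capacity_tadpole (hk5 : 5 ≤ k) (hc : l = 2 * c) :
    shannonCapacity (SimpleGraph.cycleGraph k) + (c : ℝ) ≤
      shannonCapacity (tadpole k l) := by
  classical
  haveI : Nonempty (Fin k) := ⟨⟨0, by omega⟩⟩
  haveI : Nonempty (Fin (k + l)) := ⟨⟨0, by omega⟩⟩
  set ΘT := shannonCapacity (tadpole k l) with hΘT
  have key : ∀ j : ℕ,
      (indepNum (strongPow (SimpleGraph.cycleGraph k) (j + 1)) : ℝ) ^ ((1 : ℝ) / (j + 1)) + c
        ≤ ΘT := by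
    intro j
    set m := j + 1 with hm
    set a := (indepNum (strongPow (SimpleGraph.cycleGraph k) m) : ℝ) with ha
    have ha1 : (1 : ℝ) ≤ a := by
      rw [ha]
      exact_mod_cast one_le_indepNum_strongPow (SimpleGraph.cycleGraph k) m
    have ha0 : (0 : ℝ) < a := by linarith
    set am := a ^ ((1 : ℝ) / m) with ham
    have ham1 : (1 : ℝ) ≤ am := by
      have := Real.rpow_le_rpow_of_exponent_le ha1
        (by positivity : (0 : ℝ) ≤ 1 / (m : ℝ))
      rw [Real.rpow_zero] at this
      exact this
    have ham0 : (0 : ℝ) < am := by linarith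
    have hamm : am ^ (m : ℕ) = a := by
      rw [ham, ← Real.rpow_natCast (a ^ ((1 : ℝ) / m)) m, ← Real.rpow_mul ha0.le,
        one_div_mul_cancel (by positivity : (m : ℝ) ≠ 0), Real.rpow_one]
    -- pointwise bound : am^(i+1) ≤ alpha_i * a
    have hpt : ∀ i : ℕ, am ^ (i + 1)
        ≤ (indepNum (strongPow (SimpleGraph.cycleGraph k) i) : ℝ) * a := by
      intro i
      obtain ⟨q, r, hqr, hr⟩ : ∃ q r, m * q + r = i ∧ r < m :=
        ⟨i / m, i % m, Nat.div_add_mod i m, Nat.mod_lt _ (by omega)⟩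
      have h1 : (indepNum (strongPow (SimpleGraph.cycleGraph k) m) : ℝ) ^ q
          ≤ (indepNum (strongPow (SimpleGraph.cycleGraph k) i) : ℝ) := by
        rw [← hqr]
        exact_mod_cast supermult_pow (SimpleGraph.cycleGraph k) m q r
      have h2 : am ^ (i + 1) ≤ am ^ (m * q + m) :=
        pow_le_pow_right₀ ham1 (by omega)
      have h3 : am ^ (m * q + m) = a ^ q * a := by
        rw [pow_add, pow_mul, hamm]
      refine h2.trans ?_
      rw [h3]
      exact mul_le_mul_of_nonneg_right h1 ha0.le
    -- sum bound
    have hsum : ∀ n : ℕ, am * (am + c) ^ n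
        ≤ (indepNum (strongPow (tadpole k l) n) : ℝ) * a := by
      intro n
      have h1 : (∑ S ∈ (Finset.univ : Finset (Fin n)).powerset,
          (indepNum (strongPow (SimpleGraph.cycleGraph k) S.card) : ℝ)
            * (c : ℝ) ^ (n - S.card))
          ≤ (indepNum (strongPow (tadpole k l) n) : ℝ) := by
        exact_mod_cast le_tad_pow hk5 hc n
      have h2 : am * (am + c) ^ n ≤ (∑ S ∈ (Finset.univ : Finset (Fin n)).powerset,
          (indepNum (strongPow (SimpleGraph.cycleGraph k) S.card) : ℝ)
            * (c : ℝ) ^ (n - S.card)) * a := by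
        rw [← binom_sum am (c : ℝ) n, Finset.mul_sum, Finset.sum_mul]
        refine Finset.sum_le_sum (fun S hS => ?_)
        have h3 : am * (am ^ S.card * (c : ℝ) ^ (n - S.card))
            = am ^ (S.card + 1) * (c : ℝ) ^ (n - S.card) := by ring
        rw [h3]
        have h4 := hpt S.card
        calc am ^ (S.card + 1) * (c : ℝ) ^ (n - S.card)
            ≤ ((indepNum (strongPow (SimpleGraph.cycleGraph k) S.card) : ℝ) * a)
              * (c : ℝ) ^ (n - S.card) :=
              mul_le_mul_of_nonneg_right h4 (by positivity)
          _ = (indepNum (strongPow (SimpleGraph.cycleGraph k) S.card) : ℝ)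
              * (c : ℝ) ^ (n - S.card) * a := by ring
      exact h2.trans (mul_le_mul_of_nonneg_right h1 ha0.le)
    -- per n bound on capacity
    set E := am / a with hE
    have hE0 : 0 < E := by positivity
    have hstep : ∀ t : ℕ, E ^ ((1 : ℝ) / (t + 1)) * (am + c) ≤ ΘT := by
      intro t
      set n := t + 1 with hn
      have h1 : E * (am + c) ^ n ≤ (indepNum (strongPow (tadpole k l) n) : ℝ) := by
        rw [hE, div_mul_eq_mul_div, div_le_iff₀ ha0]
        exact hsum n
      have h2 := Real.rpow_le_rpow (by positivity) h1
        (by positivity : (0 : ℝ) ≤ 1 / ((t : ℝ) + 1))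
      have h3 : (E * (am + c) ^ n) ^ ((1 : ℝ) / ((t : ℝ) + 1))
          = E ^ ((1 : ℝ) / ((t : ℝ) + 1)) * (am + c) := by
        rw [Real.mul_rpow hE0.le (by positivity),
          ← Real.rpow_natCast (am + c) n, ← Real.rpow_mul (by positivity)]
        rw [hn]
        push_cast
        rw [mul_one_div, div_self (by positivity), Real.rpow_one]
      rw [h3] at h2
      exact h2.trans (le_capacity (tadpole k l) t)
    -- take the limit
    have hlim : Filter.Tendsto (fun t : ℕ => E ^ ((1 : ℝ) / (t + 1)) * (am + c))
        Filter.atTop (nhds (am + c)) := by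
      have h1 : Filter.Tendsto (fun t : ℕ => (1 : ℝ) / (t + 1)) Filter.atTop (nhds 0) :=
        tendsto_one_div_add_atTop_nhds_zero_nat
      have h2 : Filter.Tendsto (fun t : ℕ => E ^ ((1 : ℝ) / (t + 1)))
          Filter.atTop (nhds 1) := by
        have h3 : (fun t : ℕ => E ^ ((1 : ℝ) / (t + 1)))
            = fun t : ℕ => Real.exp (Real.log E * ((1 : ℝ) / (t + 1))) := by
          funext t
          rw [Real.rpow_def_of_pos hE0]
        rw [h3]
        have h4 : Filter.Tendsto (fun t : ℕ => Real.log E * ((1 : ℝ) / (t + 1)))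
            Filter.atTop (nhds 0) := by
          have := h1.const_mul (Real.log E)
          simpa using this
        have h5 := (Real.continuous_exp.tendsto 0).comp h4
        simpa [Function.comp_def] using h5
      have h6 := h2.mul_const (am + c)
      simpa using h6
    have := le_of_tendsto' hlim hstep
    -- goal: am + c ≤ ΘT   with exponent cast shape
    refine le_trans (le_of_eq ?_) this
    rw [ham, hm]
    push_cast
    ring
  -- now conclude
  have h7 : shannonCapacity (SimpleGraph.cycleGraph k) ≤ ΘT - c := by
    apply ciSup_le
    intro j
    have := key j
    linarith
  linarith

end final

theorem capacity_tadpole_odd_even (k l : ℕ) (hk : 5 ≤ k) (hkodd : Odd k) (hleven : Even l) :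
    shannonCapacity (tadpole k l) = shannonCapacity (SimpleGraph.cycleGraph k) + (l : ℝ) / 2 := by
  obtain ⟨c, hc⟩ := hleven
  have hc' : l = 2 * c := by omega
  have hcast : (l : ℝ) / 2 = (c : ℝ) := by
    have h : (l : ℝ) = 2 * (c : ℝ) := by exact_mod_cast hc'
    rw [h]; ring
  rw [hcast]
  exact le_antisymm (capacity_tadpole_le hk hc') (le_capacity_tadpole hk hc')


end Paper
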